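/- Let A = ⟨Q, Σ₀ ∪ {a}⟩ be an almost group automaton with G = ⟨Σ₀⟩ transitive and e = excl(a). If q → p is an edge of the graph Γ₁(A) (i.e., there is a word w of defect 1 with excl(w) = {q} and dupl(w) = {p}), then there exists σ ∈ G with e·σ = q and a word v of defect 1 with excl(v) = {e} and dupl(v) = {p·σ⁻¹}. -/

import Mathlib

/-- The transformation monoid generated by the permutation letters S0 and the
defect-1 letter a. -/
def Mgen {Q : Type*} (S0 : Set (Equiv.Perm Q)) (a : Function.End Q) :
    Submonoid (Function.End Q) :=
  Submonoid.closure ((fun σ : Equiv.Perm Q => (⇑σ : Function.End Q)) '' S0 ∪ {a})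

/-- The coercion from permutations to endomorphisms as a monoid hom. -/
def permCoe (Q : Type*) : Equiv.Perm Q →* Function.End Q :=
  (Units.coeHom _).comp Equiv.Perm.equivUnitsEnd.toMonoidHom

lemma permCoe_apply {Q : Type*} (σ : Equiv.Perm Q) : permCoe Q σ = (⇑σ : Function.End Q) := rfl

lemma coe_mem_Mgen {Q : Type*} [Fintype Q] (S0 : Set (Equiv.Perm Q))
    (a : Function.End Q) {σ : Equiv.Perm Q} (hσ : σ ∈ Subgroup.closure S0) :
    permCoe Q σ ∈ Mgen S0 a ∧ permCoe Q σ⁻¹ ∈ Mgen S0 a := by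
  induction hσ using Subgroup.closure_induction with
  | mem τ hτ =>
    have h1 : permCoe Q τ ∈ Mgen S0 a :=
      Submonoid.subset_closure (Or.inl ⟨τ, hτ, rfl⟩)
    refine ⟨h1, ?_⟩
    have horder : τ⁻¹ = τ ^ (orderOf τ - 1) := by
      have h := pow_orderOf_eq_one τ
      have hpos : 0 < orderOf τ := orderOf_pos τ
      rw [eq_comm, eq_inv_iff_mul_eq_one, ← pow_succ, Nat.sub_add_cancel hpos, h]
    rw [horder, map_pow]
    exact pow_mem h1 _
  | one => exact ⟨Submonoid.one_mem _, by simpa using Submonoid.one_mem (Mgen S0 a)⟩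
  | mul σ τ _ _ hσ' hτ' =>
    constructor
    · rw [map_mul]
      exact Submonoid.mul_mem _ hσ'.1 hτ'.1
    · rw [mul_inv_rev, map_mul]
      exact Submonoid.mul_mem _ hτ'.2 hσ'.2
  | inv σ _ hσ' => exact ⟨hσ'.2, by simpa using hσ'.1⟩

/-- Every edge q → p of Γ₁(A) is the image by a permutation of G of an edge
with source e: there is σ ∈ G with e·σ = q and a defect-1 word v with
excl(v) = {e} and dupl(v) = {p·σ⁻¹}. -/
theorem stmt11 {Q : Type*} [Fintype Q] (S0 : Set (Equiv.Perm Q))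
    (a : Function.End Q) (e : Q)
    (ha : ((Set.range (a : Q → Q))ᶜ : Set Q) = {e})
    (htrans : ∀ p q : Q, ∃ σ ∈ Subgroup.closure S0, σ p = q)
    (q p : Q)
    (hedge : ∃ w ∈ Mgen S0 a, ((Set.range (w : Q → Q))ᶜ : Set Q) = {q} ∧
      {x : Q | ∃ y z : Q, y ≠ z ∧ w y = x ∧ w z = x} = {p}) :
    ∃ σ ∈ Subgroup.closure S0, σ e = q ∧
      ∃ v ∈ Mgen S0 a, ((Set.range (v : Q → Q))ᶜ : Set Q) = {e} ∧
        {x : Q | ∃ y z : Q, y ≠ z ∧ v y = x ∧ v z = x} = {σ⁻¹ p} := by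
  obtain ⟨w, hw, hexcl, hdupl⟩ := hedge
  obtain ⟨σ, hσ, hσe⟩ := htrans e q
  refine ⟨σ, hσ, hσe, permCoe Q σ⁻¹ * w * permCoe Q σ, ?_, ?_, ?_⟩
  · exact Submonoid.mul_mem _ (Submonoid.mul_mem _ (coe_mem_Mgen S0 a hσ).2 hw)
      (coe_mem_Mgen S0 a hσ).1
  · -- range computation
    have hv : (permCoe Q σ⁻¹ * w * permCoe Q σ : Function.End Q)
        = (⇑σ⁻¹ ∘ w ∘ ⇑σ : Q → Q) := rfl
    rw [hv]
    have hr : Set.range (⇑σ⁻¹ ∘ w ∘ ⇑σ : Q → Q) = ⇑σ⁻¹ '' Set.range (w : Q → Q) := by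
      rw [Set.range_comp]
      exact congrArg _ (σ.surjective.range_comp (w : Q → Q))
    rw [hr, ← Equiv.image_compl, hexcl, Set.image_singleton]
    simp [← hσe]
  · -- dupl computation
    ext x
    simp only [Set.mem_setOf_eq, Set.mem_singleton_iff]
    constructor
    · rintro ⟨y, z, hyz, hy, hz⟩
      have hy' : w (σ y) = σ x := by
        have : σ (σ⁻¹ (w (σ y))) = σ x := congrArg σ hy
        simpa using this
      have hz' : w (σ z) = σ x := by
        have : σ (σ⁻¹ (w (σ z))) = σ x := congrArg σ hz
        simpa using this
      have : σ x ∈ ({p} : Set Q) := by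
        rw [← hdupl]
        exact ⟨σ y, σ z, fun h => hyz (σ.injective h), hy', hz'⟩
      simp only [Set.mem_singleton_iff] at this
      rw [← this]; simp
    · rintro rfl
      have : p ∈ ({p} : Set Q) := rfl
      rw [← hdupl] at this
      obtain ⟨y, z, hyz, hy, hz⟩ := this
      refine ⟨σ⁻¹ y, σ⁻¹ z, fun h => hyz (by simpa using congrArg σ h), ?_, ?_⟩
      · show σ⁻¹ (w (σ (σ⁻¹ y))) = σ⁻¹ p
        simp [hy]
      · show σ⁻¹ (w (σ (σ⁻¹ z))) = σ⁻¹ p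
        simp [hz]
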